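/- Let ρ be a qubit density matrix and n ∈ ℝ³ a unit vector. Then there exists a pure-state decomposition ρ = ∑ₖ pₖ |ψₖ⟩⟨ψₖ| whose average variance attains the variance of ρ itself: ∑ₖ pₖ (ΔL_n)²_{ψₖ} = (ΔL_n)²_ρ. (This realizes the concave-roof property of the variance for qubits; geometrically, such a maximal decomposition corresponds to a chord through the Bloch vector of ρ that is perpendicular to n.) -/

import Mathlib

open Matrix BigOperators
open scoped ComplexOrder

/-- The Pauli matrix σx. -/
def sigmaX : Matrix (Fin 2) (Fin 2) ℂ := !![0, 1; 1, 0]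

/-- The Pauli matrix σy. -/
def sigmaY : Matrix (Fin 2) (Fin 2) ℂ := !![0, -Complex.I; Complex.I, 0]

/-- The Pauli matrix σz. -/
def sigmaZ : Matrix (Fin 2) (Fin 2) ℂ := !![1, 0; 0, -1]

/-- The spin-1/2 operator L_n = (n₁σx + n₂σy + n₃σz)/2 along the direction n ∈ ℝ³. -/
noncomputable def Lspin (n : Fin 3 → ℝ) : Matrix (Fin 2) (Fin 2) ℂ :=
  (1 / 2 : ℂ) • ((n 0 : ℂ) • sigmaX + (n 1 : ℂ) • sigmaY + (n 2 : ℂ) • sigmaZ)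

/-- A qubit density matrix: 2×2 positive semidefinite with unit trace. -/
def IsDensity (ρ : Matrix (Fin 2) (Fin 2) ℂ) : Prop :=
  ρ.PosSemidef ∧ ρ.trace = 1

/-- The rank-one projection |ψ⟩⟨ψ|. -/
def ketbra (ψ : Fin 2 → ℂ) : Matrix (Fin 2) (Fin 2) ℂ :=
  Matrix.vecMulVec ψ (star ψ)

/-- Pure-state variance (ΔA)²_ψ = ⟨ψ, A²ψ⟩ − ⟨ψ, Aψ⟩². -/
noncomputable def pureVar (A : Matrix (Fin 2) (Fin 2) ℂ) (ψ : Fin 2 → ℂ) : ℝ :=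
  (star ψ ⬝ᵥ (A * A).mulVec ψ).re - ((star ψ ⬝ᵥ A.mulVec ψ).re) ^ 2

/-- Mixed-state variance (ΔA)²_ρ = Tr(A²ρ) − (Tr(Aρ))². -/
noncomputable def mixVar (A ρ : Matrix (Fin 2) (Fin 2) ℂ) : ℝ :=
  ((A * A * ρ).trace).re - (((A * ρ).trace).re) ^ 2

/-- The purity Tr(ρ²). -/
noncomputable def purity (ρ : Matrix (Fin 2) (Fin 2) ℂ) : ℝ :=
  ((ρ * ρ).trace).re

/-! ### Auxiliary machinery -/

lemma SpinAux.mul_vecMulVec (A : Matrix (Fin 2) (Fin 2) ℂ) (x y : Fin 2 → ℂ) :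
    A * vecMulVec x y = vecMulVec (A.mulVec x) y := by
  ext i j
  fin_cases i <;> simp [vecMulVec_apply, Matrix.mul_apply, mulVec, dotProduct, Fin.sum_univ_two] <;>
  ring

lemma SpinAux.vecMulVec_mul_vecMulVec (x y z w : Fin 2 → ℂ) :
    vecMulVec x y * vecMulVec z w = (y ⬝ᵥ z) • vecMulVec x w := by
  ext i j
  simp [vecMulVec_apply, Matrix.mul_apply, dotProduct, Finset.sum_mul, Finset.mul_sum]
  try ring

lemma SpinAux.trace_vecMulVec (x y : Fin 2 → ℂ) :
    (vecMulVec x y).trace = y ⬝ᵥ x := by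
  simp [Matrix.trace, vecMulVec_apply, dotProduct, Matrix.diag, mul_comm]

lemma SpinAux.sandwich (ρ : Matrix (Fin 2) (Fin 2) ℂ) (x y z w : Fin 2 → ℂ) :
    vecMulVec x y * ρ * vecMulVec z w = (y ⬝ᵥ ρ.mulVec z) • vecMulVec x w := by
  rw [Matrix.mul_assoc, SpinAux.mul_vecMulVec, SpinAux.vecMulVec_mul_vecMulVec]

lemma SpinAux.star_dot (e f : Fin 2 → ℂ) : star (star e ⬝ᵥ f) = star f ⬝ᵥ e := by
  simp [dotProduct, Fin.sum_univ_two, mul_comm]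

lemma SpinAux.dot_expand (e f g h : Fin 2 → ℂ) (x y z w : ℂ) :
    star (x • e + y • f) ⬝ᵥ (z • g + w • h) =
      (starRingEnd ℂ) x * z * (star e ⬝ᵥ g) + (starRingEnd ℂ) x * w * (star e ⬝ᵥ h) +
      (starRingEnd ℂ) y * z * (star f ⬝ᵥ g) + (starRingEnd ℂ) y * w * (star f ⬝ᵥ h) := by
  simp [dotProduct, Fin.sum_univ_two]
  ring

lemma SpinAux.ketbra_expand (e f : Fin 2 → ℂ) (x y : ℂ) :
    ketbra (x • e + y • f) =
      (x * (starRingEnd ℂ) x) • vecMulVec e (star e) +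
      (x * (starRingEnd ℂ) y) • vecMulVec e (star f) +
      (y * (starRingEnd ℂ) x) • vecMulVec f (star e) +
      (y * (starRingEnd ℂ) y) • vecMulVec f (star f) := by
  ext i j
  simp [ketbra, vecMulVec_apply, Matrix.add_apply, Matrix.smul_apply, smul_eq_mul]
  ring

noncomputable def SpinAux.Nmat (n : Fin 3 → ℝ) : Matrix (Fin 2) (Fin 2) ℂ :=
  !![(n 2 : ℂ), (n 0 : ℂ) - (n 1 : ℂ) * Complex.I;
     (n 0 : ℂ) + (n 1 : ℂ) * Complex.I, -(n 2 : ℂ)]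

lemma SpinAux.Lspin_eq (n : Fin 3 → ℝ) : Lspin n = (1/2 : ℂ) • SpinAux.Nmat n := by
  ext i j
  fin_cases i <;> fin_cases j <;>
    simp [Lspin, SpinAux.Nmat, sigmaX, sigmaY, sigmaZ] <;> ring

lemma SpinAux.Nmat_sq (n : Fin 3 → ℝ) (hn : n ⬝ᵥ n = 1) :
    SpinAux.Nmat n * SpinAux.Nmat n = 1 := by
  have h : (n 0:ℝ)^2 + (n 1)^2 + (n 2)^2 = 1 := by
    simpa [dotProduct, Fin.sum_univ_three, sq] using hn
  have hc : ((n 0:ℂ))^2 + ((n 1:ℂ))^2 + ((n 2:ℂ))^2 = 1 := by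
    exact_mod_cast congrArg (Complex.ofReal) h
  ext i j
  fin_cases i <;> fin_cases j <;>
    simp [SpinAux.Nmat, Matrix.mul_apply, Fin.sum_univ_two, Matrix.one_apply] <;>
    ring_nf <;>
    linear_combination hc - ((n 1:ℂ))^2 * Complex.I_sq

lemma SpinAux.eigenbasis (n : Fin 3 → ℝ) (hn : n ⬝ᵥ n = 1) :
    ∃ e f : Fin 2 → ℂ, star e ⬝ᵥ e = 1 ∧ star f ⬝ᵥ f = 1 ∧ star e ⬝ᵥ f = 0 ∧
      (SpinAux.Nmat n).mulVec e = e ∧ (SpinAux.Nmat n).mulVec f = -f := by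
  have h : (n 0:ℝ)^2 + (n 1)^2 + (n 2)^2 = 1 := by
    simpa [dotProduct, Fin.sum_univ_three, sq] using hn
  by_cases h2 : n 2 = -1
  · have h0 : n 0 = 0 := by nlinarith
    have h1 : n 1 = 0 := by nlinarith
    refine ⟨![0,1], ![1,0], ?_, ?_, ?_, ?_, ?_⟩ <;>
      simp [dotProduct, Fin.sum_univ_two, SpinAux.Nmat, mulVec, h0, h1, h2] <;>
      (funext i; fin_cases i <;>
        simp [SpinAux.Nmat, mulVec, dotProduct, Fin.sum_univ_two, h0, h1, h2])
  · have hlt : -1 < n 2 := by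
      rcases lt_or_eq_of_le (by nlinarith : -1 ≤ n 2) with h' | h'
      · exact h'
      · exact absurd h'.symm h2
    have hpos : 0 < 2*(1 + n 2) := by linarith
    set s : ℝ := Real.sqrt (2*(1+n 2)) with hs_def
    have hs0 : 0 < s := Real.sqrt_pos.mpr hpos
    have hs2 : s^2 = 2*(1+n 2) := Real.sq_sqrt hpos.le
    have hsne : (s:ℂ) ≠ 0 := by exact_mod_cast hs0.ne'
    have hsc : (s:ℂ)^2 = 2*(1+(n 2:ℂ)) := by exact_mod_cast congrArg Complex.ofReal hs2
    have hc : ((n 0:ℂ))^2 + ((n 1:ℂ))^2 + ((n 2:ℂ))^2 = 1 := by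
      exact_mod_cast congrArg Complex.ofReal h
    refine ⟨![(1+(n 2:ℂ))/s, ((n 0:ℂ) + (n 1:ℂ)*Complex.I)/s],
            ![(-(n 0:ℂ) + (n 1:ℂ)*Complex.I)/s, (1+(n 2:ℂ))/s], ?_, ?_, ?_, ?_, ?_⟩
    · simp only [dotProduct, Fin.sum_univ_two, Pi.star_apply, Matrix.cons_val_zero,
        Matrix.cons_val_one, Matrix.head_cons, RCLike.star_def, map_div₀, map_add, _root_.map_mul,
        _root_.map_one, Complex.conj_ofReal, Complex.conj_I, map_neg]
      field_simp
      ring_nf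
      linear_combination hc - hsc - ((n 1:ℂ))^2 * Complex.I_sq
    · simp only [dotProduct, Fin.sum_univ_two, Pi.star_apply, Matrix.cons_val_zero,
        Matrix.cons_val_one, Matrix.head_cons, RCLike.star_def, map_div₀, map_add, _root_.map_mul,
        _root_.map_one, Complex.conj_ofReal, Complex.conj_I, map_neg]
      field_simp
      ring_nf
      linear_combination hc - hsc - ((n 1:ℂ))^2 * Complex.I_sq
    · simp only [dotProduct, Fin.sum_univ_two, Pi.star_apply, Matrix.cons_val_zero,
        Matrix.cons_val_one, Matrix.head_cons, RCLike.star_def, map_div₀, map_add, _root_.map_mul,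
        _root_.map_one, Complex.conj_ofReal, Complex.conj_I, map_neg]
      field_simp
      ring_nf
    · funext i; fin_cases i <;>
        simp only [SpinAux.Nmat, mulVec, dotProduct, Fin.sum_univ_two, Matrix.cons_val_zero,
          Matrix.cons_val_one, Matrix.head_cons, Matrix.cons_val', Matrix.empty_val',
          Matrix.cons_val_fin_one, Matrix.of_apply, Fin.zero_eta, Fin.mk_one] <;>
        (field_simp; ring_nf; try first
          | linear_combination hc - ((n 1:ℂ))^2 * Complex.I_sq
          | linear_combination -hc + ((n 1:ℂ))^2 * Complex.I_sq
          | linear_combination hc + ((n 1:ℂ))^2 * Complex.I_sq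
          | linear_combination -hc - ((n 1:ℂ))^2 * Complex.I_sq
          | linear_combination 2*hc - 2*((n 1:ℂ))^2 * Complex.I_sq
          | linear_combination -2*hc + 2*((n 1:ℂ))^2 * Complex.I_sq)
    · funext i; fin_cases i <;>
        simp only [SpinAux.Nmat, mulVec, dotProduct, Fin.sum_univ_two, Matrix.cons_val_zero,
          Matrix.cons_val_one, Matrix.head_cons, Matrix.cons_val', Matrix.empty_val',
          Matrix.cons_val_fin_one, Matrix.of_apply, Pi.neg_apply, Fin.zero_eta, Fin.mk_one] <;>
        (field_simp; ring_nf; try first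
          | linear_combination hc - ((n 1:ℂ))^2 * Complex.I_sq
          | linear_combination -hc + ((n 1:ℂ))^2 * Complex.I_sq
          | linear_combination hc + ((n 1:ℂ))^2 * Complex.I_sq
          | linear_combination -hc - ((n 1:ℂ))^2 * Complex.I_sq
          | linear_combination 2*hc - 2*((n 1:ℂ))^2 * Complex.I_sq
          | linear_combination -2*hc + 2*((n 1:ℂ))^2 * Complex.I_sq)

lemma SpinAux.complete (e f : Fin 2 → ℂ) (hee : star e ⬝ᵥ e = 1) (hff : star f ⬝ᵥ f = 1)
    (hef : star e ⬝ᵥ f = 0) : vecMulVec e (star e) + vecMulVec f (star f) = 1 := by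
  have hfe : star f ⬝ᵥ e = 0 := by
    have := SpinAux.star_dot e f
    rw [hef] at this; simpa using this.symm
  set U : Matrix (Fin 2) (Fin 2) ℂ := Matrix.of (fun i j => if j = 0 then e i else f i) with hU
  simp only [dotProduct, Fin.sum_univ_two, Pi.star_apply, RCLike.star_def] at hee hff hef hfe
  have h1 : Uᴴ * U = 1 := by
    ext i j
    fin_cases i <;> fin_cases j <;>
      simp [Matrix.mul_apply, Matrix.conjTranspose_apply, Fin.sum_univ_two, hU,
        Matrix.one_apply] <;>
      first | exact hee | exact hff | exact hef | exact hfe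
  have h2 : U * Uᴴ = 1 := mul_eq_one_comm.mp h1
  calc vecMulVec e (star e) + vecMulVec f (star f) = U * Uᴴ := by
        ext i j
        simp [Matrix.mul_apply, Matrix.conjTranspose_apply, Fin.sum_univ_two, hU,
          vecMulVec_apply, mul_comm]
    _ = 1 := h2

/-- There exists a pure-state decomposition of a qubit state ρ whose average variance
attains the variance of ρ itself (the concave-roof property of the variance). -/
theorem stmt_8 (ρ : Matrix (Fin 2) (Fin 2) ℂ) (hρ : IsDensity ρ)
    (n : Fin 3 → ℝ) (hn : n ⬝ᵥ n = 1) :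
    ∃ (m : ℕ) (p : Fin m → ℝ) (ψ : Fin m → (Fin 2 → ℂ)),
      (∀ k, 0 ≤ p k) ∧ (∑ k, p k) = 1 ∧
      (∀ k, star (ψ k) ⬝ᵥ ψ k = 1) ∧
      ρ = (∑ k, p k • ketbra (ψ k)) ∧
      (∑ k, p k * pureVar (Lspin n) (ψ k)) = mixVar (Lspin n) ρ := by
  obtain ⟨hpsd, htr⟩ := hρ
  obtain ⟨e, f, hee, hff, hef, heN, hfN⟩ := SpinAux.eigenbasis n hn
  have hfe : star f ⬝ᵥ e = 0 := by
    have := SpinAux.star_dot e f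
    rw [hef] at this; simpa using this.symm
  set L := Lspin n with hLdef
  have hLN := SpinAux.Lspin_eq n
  have hL2 : L * L = (1/4 : ℂ) • 1 := by
    rw [hLdef, hLN, Matrix.smul_mul, Matrix.mul_smul, smul_smul, SpinAux.Nmat_sq n hn]
    norm_num
  have hLe : L.mulVec e = (1/2 : ℂ) • e := by
    rw [hLdef, hLN, Matrix.smul_mulVec, heN]
  have hLf : L.mulVec f = (-(1/2) : ℂ) • f := by
    rw [hLdef, hLN, Matrix.smul_mulVec, hfN]
    ext i; simp [neg_div]; try ring
  set Ac := star e ⬝ᵥ ρ.mulVec e with hAcdef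
  set Bc := star f ⬝ᵥ ρ.mulVec f with hBcdef
  set Wc := star e ⬝ᵥ ρ.mulVec f with hWcdef
  have hij : ∀ i j, (starRingEnd ℂ) (ρ i j) = ρ j i := by
    intro i j
    have := hpsd.1
    rw [Matrix.IsHermitian] at this
    conv_rhs => rw [← this]
    simp [Matrix.conjTranspose_apply]
  have hW' : star f ⬝ᵥ ρ.mulVec e = (starRingEnd ℂ) Wc := by
    rw [hWcdef]
    simp only [dotProduct, mulVec, Fin.sum_univ_two, Pi.star_apply, RCLike.star_def,
      map_add, _root_.map_mul, Complex.conj_conj, hij]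
    ring_nf
    try simp [hij]
    try ring
  have hA0 := hpsd.dotProduct_mulVec_nonneg e
  have hB0 := hpsd.dotProduct_mulVec_nonneg f
  rw [Complex.nonneg_iff] at hA0 hB0
  set A := Ac.re with hAdef
  set B := Bc.re with hBdef
  have hAre : Ac = (A : ℂ) := Complex.ext rfl (hA0.2).symm
  have hBre : Bc = (B : ℂ) := Complex.ext rfl (hB0.2).symm
  have hAnn : 0 ≤ A := hA0.1
  have hBnn : 0 ≤ B := hB0.1
  have hcomp := SpinAux.complete e f hee hff hef
  have htrAB : Ac + Bc = 1 := by
    calc Ac + Bc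
        = (ρ * (vecMulVec e (star e) + vecMulVec f (star f))).trace := by
          rw [Matrix.mul_add, SpinAux.mul_vecMulVec, SpinAux.mul_vecMulVec,
            Matrix.trace_add, SpinAux.trace_vecMulVec, SpinAux.trace_vecMulVec]
      _ = 1 := by rw [hcomp, Matrix.mul_one, htr]
  have hABc : (A:ℂ) + (B:ℂ) = 1 := by rw [← hAre, ← hBre]; exact htrAB
  have hAB : A + B = 1 := by exact_mod_cast hABc
  have hrec : ρ = Ac • vecMulVec e (star e) + Wc • vecMulVec e (star f) +
      ((starRingEnd ℂ) Wc) • vecMulVec f (star e) + Bc • vecMulVec f (star f) := by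
    have h1 : ρ = (vecMulVec e (star e) + vecMulVec f (star f)) * ρ *
        (vecMulVec e (star e) + vecMulVec f (star f)) := by
      rw [hcomp, Matrix.one_mul, Matrix.mul_one]
    rw [h1]
    simp only [Matrix.add_mul, Matrix.mul_add, SpinAux.sandwich]
    rw [hW']
    abel
  have hqexp : ∀ x y : ℂ, star (x • e + y • f) ⬝ᵥ ρ.mulVec (x • e + y • f) =
      (starRingEnd ℂ) x * x * Ac + (starRingEnd ℂ) x * y * Wc +
      (starRingEnd ℂ) y * x * ((starRingEnd ℂ) Wc) + (starRingEnd ℂ) y * y * Bc := by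
    intro x y
    rw [Matrix.mulVec_add, Matrix.mulVec_smul, Matrix.mulVec_smul,
      SpinAux.dot_expand, hW']
  have hmc : Wc * (starRingEnd ℂ) Wc = ((Complex.normSq Wc : ℝ) : ℂ) := Complex.mul_conj Wc
  have hq1 : 0 ≤ A * (A * B - Complex.normSq Wc) := by
    have h := hpsd.dotProduct_mulVec_nonneg (Wc • e + (-(A:ℝ) : ℂ) • f)
    rw [hqexp] at h
    have heq : (starRingEnd ℂ) Wc * Wc * Ac + (starRingEnd ℂ) Wc * (-(A:ℝ) : ℂ) * Wc +
        (starRingEnd ℂ) (-(A:ℝ) : ℂ) * Wc * ((starRingEnd ℂ) Wc) +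
        (starRingEnd ℂ) (-(A:ℝ) : ℂ) * (-(A:ℝ) : ℂ) * Bc
        = ((A * (A * B - Complex.normSq Wc) : ℝ) : ℂ) := by
      rw [hAre, hBre]
      push_cast
      simp only [Complex.conj_ofReal, map_neg]
      linear_combination (-(A:ℂ)) * hmc
    rw [heq] at h
    exact_mod_cast h
  have hq2 : 0 ≤ B * (A * B - Complex.normSq Wc) := by
    have h := hpsd.dotProduct_mulVec_nonneg (((B:ℝ):ℂ) • e + (-(starRingEnd ℂ) Wc) • f)
    rw [hqexp] at h
    have heq : (starRingEnd ℂ) ((B:ℝ) : ℂ) * ((B:ℝ):ℂ) * Ac +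
        (starRingEnd ℂ) ((B:ℝ):ℂ) * (-(starRingEnd ℂ) Wc) * Wc +
        (starRingEnd ℂ) (-(starRingEnd ℂ) Wc) * ((B:ℝ):ℂ) * ((starRingEnd ℂ) Wc) +
        (starRingEnd ℂ) (-(starRingEnd ℂ) Wc) * (-(starRingEnd ℂ) Wc) * Bc
        = ((B * (A * B - Complex.normSq Wc) : ℝ) : ℂ) := by
      rw [hAre, hBre]
      push_cast
      simp only [Complex.conj_ofReal, map_neg, Complex.conj_conj]
      linear_combination (-(B:ℂ)) * hmc
    rw [heq] at h
    exact_mod_cast h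
  have hnsq0 : 0 ≤ Complex.normSq Wc := Complex.normSq_nonneg Wc
  have hnsqAB : Complex.normSq Wc ≤ A * B := by nlinarith
  -- trace facts
  have htrL2ρ : ((L * L * ρ).trace) = (1/4 : ℂ) := by
    rw [hL2, Matrix.smul_mul, Matrix.one_mul, Matrix.trace_smul, htr]
    norm_num
  have htrLρ : ((L * ρ).trace) = (((A - B)/2 : ℝ) : ℂ) := by
    conv_lhs => rw [hrec]
    simp only [Matrix.mul_add, Matrix.mul_smul, SpinAux.mul_vecMulVec, Matrix.trace_add,
      Matrix.trace_smul, SpinAux.trace_vecMulVec, hLe, hLf]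
    simp only [dotProduct_smul, hee, hff, hef, hfe, smul_eq_mul]
    rw [hAre, hBre]
    push_cast
    ring
  have hmix : mixVar L ρ = 1/4 - ((A - B)/2)^2 := by
    unfold mixVar
    rw [htrL2ρ, htrLρ]
    simp
  have hvar : ∀ x y : ℂ, ((starRingEnd ℂ) x * x = (A:ℂ)) → ((starRingEnd ℂ) y * y = (B:ℂ)) →
      (star (x • e + y • f) ⬝ᵥ (x • e + y • f) = 1 ∧
       pureVar L (x • e + y • f) = 1/4 - ((A - B)/2)^2) := by
    intro x y hxx hyy
    have hnorm : star (x • e + y • f) ⬝ᵥ (x • e + y • f) = 1 := by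
      have := SpinAux.dot_expand e f e f x y x y
      rw [hee, hff, hef, hfe] at this
      rw [show x • e + y • f = x • e + y • f from rfl, this, hxx, hyy]
      ring_nf
      exact_mod_cast hABc
    refine ⟨hnorm, ?_⟩
    unfold pureVar
    have h1 : (L * L).mulVec (x • e + y • f) = (1/4 : ℂ) • (x • e + y • f) := by
      rw [hL2, Matrix.smul_mulVec, Matrix.one_mulVec]
    have h2 : star (x • e + y • f) ⬝ᵥ (L * L).mulVec (x • e + y • f) = (1/4 : ℂ) := by
      rw [h1, dotProduct_smul, hnorm, smul_eq_mul, mul_one]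
    have h3 : L.mulVec (x • e + y • f) = (x * (1/2)) • e + (y * (-(1/2))) • f := by
      rw [Matrix.mulVec_add, Matrix.mulVec_smul, Matrix.mulVec_smul, hLe, hLf,
        smul_smul, smul_smul]
    have h4 : star (x • e + y • f) ⬝ᵥ L.mulVec (x • e + y • f) = (((A - B)/2 : ℝ) : ℂ) := by
      rw [h3, SpinAux.dot_expand, hee, hff, hef, hfe]
      push_cast
      linear_combination (1/2 : ℂ) * hxx - (1/2 : ℂ) * hyy
    rw [h2, h4]
    simp
  -- case split
  rcases eq_or_lt_of_le hAnn with hAz | hApos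
  · -- A = 0 : ρ is the pure state f
    have hA0' : A = 0 := hAz.symm
    have hW0 : Wc = 0 := by
      have : Complex.normSq Wc = 0 := le_antisymm (by nlinarith) hnsq0
      exact Complex.normSq_eq_zero.mp this
    have hB1 : B = 1 := by linarith
    have hρf : ρ = ketbra f := by
      rw [hrec, hAre, hBre, hA0', hB1, hW0]
      simp [ketbra]
    obtain ⟨hnorm, hpv⟩ := hvar 0 1 (by simp [hA0']) (by simp [hB1])
    have hsimp : (0:ℂ) • e + (1:ℂ) • f = f := by ext i; simp
    rw [hsimp] at hnorm hpv
    refine ⟨1, fun _ => 1, fun _ => f, fun k => by norm_num, by simp, fun k => hnorm, ?_, ?_⟩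
    · simp [hρf]
    · rw [hmix]
      simp [hpv]
  rcases eq_or_lt_of_le hBnn with hBz | hBpos
  · -- B = 0 : ρ is the pure state e
    have hB0' : B = 0 := hBz.symm
    have hW0 : Wc = 0 := by
      have : Complex.normSq Wc = 0 := le_antisymm (by nlinarith) hnsq0
      exact Complex.normSq_eq_zero.mp this
    have hA1 : A = 1 := by linarith
    have hρe : ρ = ketbra e := by
      rw [hrec, hAre, hBre, hB0', hA1, hW0]
      simp [ketbra]
    obtain ⟨hnorm, hpv⟩ := hvar 1 0 (by simp [hA1]) (by simp [hB0'])
    have hsimp : (1:ℂ) • e + (0:ℂ) • f = e := by ext i; simp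
    rw [hsimp] at hnorm hpv
    refine ⟨1, fun _ => 1, fun _ => e, fun k => by norm_num, by simp, fun k => hnorm, ?_, ?_⟩
    · simp [hρe]
    · rw [hmix]
      simp [hpv]

  -- generic case : 0 < A, 0 < B
  set sA := Real.sqrt A with hsAdef
  have hsA0 : 0 < sA := Real.sqrt_pos.mpr hApos
  have hsA2 : sA^2 = A := Real.sq_sqrt hAnn
  have hsAne : ((sA:ℝ):ℂ) ≠ 0 := by exact_mod_cast hsA0.ne'
  set R := ‖Wc‖ with hRdef
  have hR2 : R^2 = Complex.normSq Wc := Complex.sq_norm Wc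
  set D := Real.sqrt (A*B - Complex.normSq Wc) with hDdef
  have hD2 : D^2 = A*B - Complex.normSq Wc := Real.sq_sqrt (by linarith)
  set u : ℂ := if Wc = 0 then 1 else (starRingEnd ℂ) Wc / (R:ℂ) with hudef
  have huR : u * (R:ℂ) = (starRingEnd ℂ) Wc := by
    by_cases hW : Wc = 0
    · simp [hudef, hW, hRdef]
    · have hRne : ((R:ℝ):ℂ) ≠ 0 := by
        simpa [hRdef] using (norm_ne_zero_iff.mpr hW)
      rw [hudef]
      simp only [hW, if_false]
      field_simp
  have huu : u * (starRingEnd ℂ) u = 1 := by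
    by_cases hW : Wc = 0
    · simp [hudef, hW]
    · have hRne : ((R:ℝ):ℂ) ≠ 0 := by
        simpa [hRdef] using (norm_ne_zero_iff.mpr hW)
      rw [hudef]
      simp only [hW, if_false]
      rw [map_div₀, Complex.conj_conj, Complex.conj_ofReal]
      field_simp
      rw [mul_comm ((starRingEnd ℂ) Wc) Wc, Complex.mul_conj]
      exact_mod_cast congrArg Complex.ofReal
        (by rw [← hR2] : Complex.normSq Wc = R ^ 2)
  have huR' : (starRingEnd ℂ) u * (R:ℂ) = Wc := by
    have := congrArg (starRingEnd ℂ) huR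
    simpa [Complex.conj_ofReal] using this
  set yp : ℂ := u * ((R:ℂ) + (D:ℂ)*Complex.I) / (sA:ℂ) with hypdef
  set ym : ℂ := u * ((R:ℂ) - (D:ℂ)*Complex.I) / (sA:ℂ) with hymdef
  have hcjp : (starRingEnd ℂ) yp = (starRingEnd ℂ) u * ((R:ℂ) - (D:ℂ)*Complex.I) / (sA:ℂ) := by
    rw [hypdef]
    simp [map_div₀, Complex.conj_ofReal, Complex.conj_I]
    try ring
  have hcjm : (starRingEnd ℂ) ym = (starRingEnd ℂ) u * ((R:ℂ) + (D:ℂ)*Complex.I) / (sA:ℂ) := by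
    rw [hymdef]
    simp [map_div₀, Complex.conj_ofReal, Complex.conj_I]
    try ring
  have hsAc : ((sA:ℝ):ℂ) * ((sA:ℝ):ℂ) = (A:ℂ) := by
    exact_mod_cast congrArg Complex.ofReal (by rw [← hsA2]; ring : sA * sA = A)
  have hRDc : ((R:ℝ):ℂ)^2 + ((D:ℝ):ℂ)^2 = (A:ℂ)*(B:ℂ) := by
    exact_mod_cast congrArg Complex.ofReal (by rw [hR2, hD2]; ring : R^2 + D^2 = A*B)
  have hxx : (starRingEnd ℂ) ((sA:ℝ):ℂ) * ((sA:ℝ):ℂ) = (A:ℂ) := by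
    rw [Complex.conj_ofReal]; exact hsAc
  have hAne : ((A:ℝ):ℂ) ≠ 0 := by exact_mod_cast hApos.ne'
  have huu' : (starRingEnd ℂ) u * u = 1 := by rw [mul_comm]; exact huu
  have hyyp : (starRingEnd ℂ) yp * yp = (B:ℂ) := by
    rw [hcjp, hypdef, div_mul_div_comm, hsAc, div_eq_iff hAne]
    linear_combination (((R:ℂ) - (D:ℂ)*Complex.I) * ((R:ℂ) + (D:ℂ)*Complex.I)) * huu'
      - ((D:ℂ)^2) * Complex.I_sq + hRDc
  have hyym : (starRingEnd ℂ) ym * ym = (B:ℂ) := by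
    rw [hcjm, hymdef, div_mul_div_comm, hsAc, div_eq_iff hAne]
    linear_combination (((R:ℂ) + (D:ℂ)*Complex.I) * ((R:ℂ) - (D:ℂ)*Complex.I)) * huu'
      - ((D:ℂ)^2) * Complex.I_sq + hRDc
  -- coefficient identities for the decomposition
  have hcA : (1/2:ℂ) * (((sA:ℝ):ℂ) * (starRingEnd ℂ) ((sA:ℝ):ℂ))
      + (1/2:ℂ) * (((sA:ℝ):ℂ) * (starRingEnd ℂ) ((sA:ℝ):ℂ)) = Ac := by
    rw [Complex.conj_ofReal, hAre]
    linear_combination hsAc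
  have hdiv1 : ∀ z : ℂ, ((sA:ℝ):ℂ) * (z / ((sA:ℝ):ℂ)) = z := by
    intro z; field_simp
  have hdiv2 : ∀ z : ℂ, (z / ((sA:ℝ):ℂ)) * ((sA:ℝ):ℂ) = z := by
    intro z; field_simp
  have hcW : (1/2:ℂ) * (((sA:ℝ):ℂ) * (starRingEnd ℂ) yp)
      + (1/2:ℂ) * (((sA:ℝ):ℂ) * (starRingEnd ℂ) ym) = Wc := by
    rw [hcjp, hcjm, hdiv1, hdiv1]
    linear_combination huR'
  have hcW' : (1/2:ℂ) * (yp * (starRingEnd ℂ) ((sA:ℝ):ℂ))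
      + (1/2:ℂ) * (ym * (starRingEnd ℂ) ((sA:ℝ):ℂ)) = (starRingEnd ℂ) Wc := by
    rw [Complex.conj_ofReal, hypdef, hymdef, hdiv2, hdiv2]
    linear_combination huR
  have hcB : (1/2:ℂ) * (yp * (starRingEnd ℂ) yp) + (1/2:ℂ) * (ym * (starRingEnd ℂ) ym) = Bc := by
    rw [hBre]
    linear_combination (1/2:ℂ) * hyyp + (1/2:ℂ) * hyym
  clear_value sA R D u yp ym
  obtain ⟨hnormp, hpvp⟩ := hvar ((sA:ℝ):ℂ) yp hxx hyyp
  obtain ⟨hnormm, hpvm⟩ := hvar ((sA:ℝ):ℂ) ym hxx hyym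
  refine ⟨2, ![1/2, 1/2], ![((sA:ℝ):ℂ) • e + yp • f, ((sA:ℝ):ℂ) • e + ym • f],
    ?_, ?_, ?_, ?_, ?_⟩
  · intro k; fin_cases k <;> norm_num
  · rw [Fin.sum_univ_two]; norm_num
  · intro k; fin_cases k <;>
      simp only [Matrix.cons_val_zero, Matrix.cons_val_one, Matrix.head_cons] <;>
      first | exact hnormp | exact hnormm
  · rw [Fin.sum_univ_two]
    simp only [Matrix.cons_val_zero, Matrix.cons_val_one, Matrix.head_cons]
    rw [SpinAux.ketbra_expand, SpinAux.ketbra_expand]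
    conv_lhs => rw [hrec]
    ext i j
    simp only [Matrix.add_apply, Matrix.smul_apply, vecMulVec_apply, smul_eq_mul,
      Complex.real_smul, Pi.star_apply, RCLike.star_def, Complex.ofReal_div,
      Complex.ofReal_one, Complex.ofReal_ofNat]
    linear_combination (-(e i * (starRingEnd ℂ) (e j))) * hcA
      - (e i * (starRingEnd ℂ) (f j)) * hcW
      - (f i * (starRingEnd ℂ) (e j)) * hcW'
      - (f i * (starRingEnd ℂ) (f j)) * hcB
  · rw [Fin.sum_univ_two]
    simp only [Matrix.cons_val_zero, Matrix.cons_val_one, Matrix.head_cons]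
    rw [hpvp, hpvm, hmix]
    ring
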